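/- arXiv:1306.4449 — 2 statements merged into one kernel-verified Lean document; each statement's English description precedes it below -/
import Mathlib

section
/- Let q > 0, C₁ < 0, M₀ > 0, r ∈ (0,1], ᾱ ∈ (0,1) with [ᾱ-r, ᾱ+r] ⊂ [0,1], and b > 1/q. Then as ε ↓ 0, ε^{b - 1/q}·∫_{ᾱ-r}^{ᾱ+r} (ε - C₁|α - ᾱ|^q)^{-b} dα converges to (2/q)·|C₁|^{-1/q}·Γ(1 + 1/q)·Γ(b - 1/q)·q/Γ(b) · (1/2)·2, i.e. the limit equals 2·Γ(1 + 1/q)·Γ(b - 1/q)/(Γ(b)·|C₁|^{1/q}). -/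
open Real Set Filter Topology
open MeasureTheory intervalIntegral


lemma real_beta (a c : ℝ) (ha : 0 < a) (hc : 0 < c) :
    ∫ t in (0:ℝ)..1, t ^ (a - 1) * (1 - t) ^ (c - 1) =
      Real.Gamma a * Real.Gamma c / Real.Gamma (a + c) := by
  have key : Complex.Gamma a * Complex.Gamma c =
      Complex.Gamma (a + c) * Complex.betaIntegral a c :=
    Complex.Gamma_mul_Gamma_eq_betaIntegral (by simpa using ha) (by simpa using hc)
  have hB : Complex.betaIntegral a c =
      ((∫ t in (0:ℝ)..1, t ^ (a - 1) * (1 - t) ^ (c - 1) : ℝ) : ℂ) := by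
    rw [Complex.betaIntegral, ← intervalIntegral.integral_ofReal]
    refine intervalIntegral.integral_congr fun t ht => ?_
    rw [uIcc_of_le zero_le_one] at ht
    rw [Complex.ofReal_mul, Complex.ofReal_cpow ht.1, Complex.ofReal_cpow (by linarith [ht.2] : (0:ℝ) ≤ 1 - t)]
    push_cast
    ring_nf
  have hGac : Real.Gamma (a + c) ≠ 0 := (Real.Gamma_pos_of_pos (by linarith)).ne'
  have := key
  rw [hB] at this
  have h2 : (Real.Gamma a * Real.Gamma c : ℂ) =
      ((Real.Gamma (a + c) * ∫ t in (0:ℝ)..1, t ^ (a - 1) * (1 - t) ^ (c - 1) : ℝ) : ℂ) := by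
    push_cast
    rw [← Complex.Gamma_ofReal, ← Complex.Gamma_ofReal, ← Complex.Gamma_ofReal] at *
    push_cast at this ⊢
    convert this using 2
  have h3 := Complex.ofReal_injective (by exact_mod_cast h2)
  field_simp
  linarith [h3]

section
variable (a c : ℝ)

lemma beta_integrand_integrable (ha : 0 < a) (hc : 0 < c) :
    IntegrableOn (fun t : ℝ => t ^ (a - 1) * (1 - t) ^ (c - 1)) (Ioo 0 1) := by
  have h := Complex.betaIntegral_convergent (u := a) (v := c) (by simpa using ha) (by simpa using hc)
  rw [intervalIntegrable_iff, uIoc_of_le zero_le_one] at h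
  have h2 : IntegrableOn
      (fun x : ℝ => ((x:ℂ) ^ ((a:ℂ) - 1) * (1 - (x:ℂ)) ^ ((c:ℂ) - 1)).re) (Ioc 0 1) := h.re
  refine ((h2.congr_fun ?_ measurableSet_Ioc).mono_set Ioo_subset_Ioc_self)
  intro t ht
  have he : ((t:ℂ) ^ ((a:ℂ) - 1) * (1 - (t:ℂ)) ^ ((c:ℂ) - 1)) =
      ((t ^ (a - 1) * (1 - t) ^ (c - 1) : ℝ) : ℂ) := by
    rw [Complex.ofReal_mul, Complex.ofReal_cpow ht.1.le,
      Complex.ofReal_cpow (by linarith [ht.2] : (0:ℝ) ≤ 1 - t)]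
    push_cast
    ring_nf
  simp [he]

lemma cov_deriv : ∀ t ∈ Ioo (0:ℝ) 1,
    HasDerivWithinAt (fun t : ℝ => t / (1 - t)) (((1 - t) ^ 2)⁻¹) (Ioo 0 1) t := by
  intro t ht
  have h1 : (1:ℝ) - t ≠ 0 := by have := ht.2; intro h; linarith [(by linarith : t = 1)]
  have := (hasDerivAt_id t).div ((hasDerivAt_const t 1).sub (hasDerivAt_id t)) h1
  have e : ((1 - t) ^ 2)⁻¹ = (1 * (1 - t) - t * (0 - 1)) / (1 - t) ^ 2 := by
    ring
  rw [e]
  exact this.hasDerivWithinAt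

lemma cov_inj : InjOn (fun t : ℝ => t / (1 - t)) (Ioo 0 1) := by
  intro x hx y hy h
  have hx1 : (1:ℝ) - x ≠ 0 := by have := hx.2; intro hh; linarith [(by linarith : x = 1)]
  have hy1 : (1:ℝ) - y ≠ 0 := by have := hy.2; intro hh; linarith [(by linarith : y = 1)]
  field_simp at h
  linarith

lemma cov_image : (fun t : ℝ => t / (1 - t)) '' (Ioo 0 1) = Ioi 0 := by
  ext x
  constructor
  · rintro ⟨t, ht, rfl⟩
    exact div_pos ht.1 (by linarith [ht.2])
  · intro hx
    refine ⟨x / (1 + x), ⟨div_pos hx (by linarith [mem_Ioi.mp hx]), ?_⟩, ?_⟩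
    · rw [div_lt_one (by linarith [mem_Ioi.mp hx])]; linarith [mem_Ioi.mp hx]
    · have h1 : (1:ℝ) + x ≠ 0 := ne_of_gt (by linarith [mem_Ioi.mp hx])
      field_simp
      ring

lemma cov_pointwise (t : ℝ) (ht : t ∈ Ioo (0:ℝ) 1) :
    |((1 - t) ^ 2)⁻¹| • ((t / (1 - t)) ^ (a - 1) * (1 + t / (1 - t)) ^ (-(a + c)))
      = t ^ (a - 1) * (1 - t) ^ (c - 1) := by
  have ht0 : 0 < t := ht.1
  have ht1 : 0 < 1 - t := by linarith [ht.2]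
  have h1 : (1:ℝ) + t / (1 - t) = (1 - t)⁻¹ := by field_simp; ring
  have e1 : ((1-t)^2 : ℝ) = (1-t) ^ ((2:ℝ)) := by
    rw [← Real.rpow_natCast (1-t) 2]; norm_num
  rw [smul_eq_mul, h1, abs_of_pos (by positivity),
    Real.div_rpow ht0.le ht1.le, Real.inv_rpow ht1.le, Real.rpow_neg ht1.le, inv_inv, e1,
    div_eq_mul_inv, ← Real.rpow_neg ht1.le, ← Real.rpow_neg ht1.le]
  calc (1-t) ^ (-(2:ℝ)) * (t ^ (a-1) * (1-t) ^ (-(a-1)) * (1-t) ^ (a+c))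
      = t ^ (a-1) * ((1-t) ^ (-(a-1)) * (1-t) ^ (a+c) * (1-t) ^ (-(2:ℝ))) := by ring
    _ = t ^ (a-1) * (1-t) ^ (c-1) := by
        rw [← Real.rpow_add ht1, ← Real.rpow_add ht1]; ring_nf

lemma L2val (ha : 0 < a) (hc : 0 < c) :
    (∫ x in Ioi (0:ℝ), x ^ (a - 1) * (1 + x) ^ (-(a + c))) =
      ∫ t in (0:ℝ)..1, t ^ (a - 1) * (1 - t) ^ (c - 1) := by
  have := integral_image_eq_integral_abs_deriv_smul measurableSet_Ioo cov_deriv cov_inj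
    (fun x : ℝ => x ^ (a - 1) * (1 + x) ^ (-(a + c)))
  rw [cov_image] at this
  rw [this, intervalIntegral.integral_of_le zero_le_one, integral_Ioc_eq_integral_Ioo]
  exact setIntegral_congr_fun measurableSet_Ioo (fun t ht => cov_pointwise a c t ht)

lemma L2int (ha : 0 < a) (hc : 0 < c) :
    IntegrableOn (fun x : ℝ => x ^ (a - 1) * (1 + x) ^ (-(a + c))) (Ioi 0) := by
  have hiff := integrableOn_image_iff_integrableOn_abs_deriv_smul measurableSet_Ioo cov_deriv
    cov_inj (fun x : ℝ => x ^ (a - 1) * (1 + x) ^ (-(a + c)))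
  rw [cov_image] at hiff
  rw [hiff]
  exact (beta_integrand_integrable a c ha hc).congr_fun
    (fun t ht => (cov_pointwise a c t ht).symm) measurableSet_Ioo

end

section
variable {q b : ℝ}

lemma rpow_cov_deriv (hq : 0 < q) : ∀ x ∈ Ioi (0:ℝ),
    HasDerivWithinAt (fun x : ℝ => x ^ (1/q)) ((1/q) * x ^ (1/q - 1)) (Ioi 0) x :=
  fun x hx => (Real.hasDerivAt_rpow_const (Or.inl (mem_Ioi.mp hx).ne')).hasDerivWithinAt

lemma rpow_cov_inj (hq : 0 < q) : InjOn (fun x : ℝ => x ^ (1/q)) (Ioi 0) :=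
  fun x hx y hy h => by
    simp only at h
    have hxy : (x ^ (1/q)) ^ q = (y ^ (1/q)) ^ q := by rw [h]
    rwa [← Real.rpow_mul (le_of_lt hx), ← Real.rpow_mul (le_of_lt hy),
      one_div_mul_cancel hq.ne', Real.rpow_one, Real.rpow_one] at hxy

lemma rpow_cov_image (hq : 0 < q) : (fun x : ℝ => x ^ (1/q)) '' (Ioi 0) = Ioi 0 := by
  ext x
  constructor
  · rintro ⟨y, hy, rfl⟩; exact Real.rpow_pos_of_pos hy _
  · intro hx
    exact ⟨x ^ q, Real.rpow_pos_of_pos hx _, by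
      show (x ^ q) ^ (1/q) = x
      rw [← Real.rpow_mul (le_of_lt hx), mul_one_div, div_self hq.ne', Real.rpow_one]⟩

lemma L3ptwise (hq : 0 < q) (x : ℝ) (hx : x ∈ Ioi (0:ℝ)) :
    |(1/q) * x ^ (1/q - 1)| • (1 + (x ^ (1/q)) ^ q) ^ (-b)
      = (1/q) * (x ^ (1/q - 1) * (1 + x) ^ (-(1/q + (b - 1/q)))) := by
  have hx0 : (0:ℝ) < x := hx
  rw [smul_eq_mul, abs_of_pos (by positivity), ← Real.rpow_mul hx0.le,
    one_div_mul_cancel hq.ne', Real.rpow_one]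
  have : 1/q + (b - 1/q) = b := by ring
  rw [this, mul_assoc]

lemma L3int (hq : 0 < q) (hb : 1/q < b) :
    IntegrableOn (fun s : ℝ => (1 + s ^ q) ^ (-b)) (Ioi 0) := by
  have hiff := integrableOn_image_iff_integrableOn_abs_deriv_smul measurableSet_Ioi
    (rpow_cov_deriv hq) (rpow_cov_inj hq) (fun s : ℝ => (1 + s ^ q) ^ (-b))
  rw [rpow_cov_image hq] at hiff
  rw [hiff]
  have hI : IntegrableOn (fun x : ℝ =>
      (1/q) * (x ^ (1/q - 1) * (1 + x) ^ (-(1/q + (b - 1/q))))) (Ioi 0) :=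
    (L2int (1/q) (b - 1/q) (by positivity) (by linarith)).const_mul (1/q)
  exact hI.congr_fun (fun x hx => (L3ptwise hq x hx).symm) measurableSet_Ioi

lemma L3val (hq : 0 < q) (hb : 1/q < b) :
    ∫ s in Ioi (0:ℝ), (1 + s ^ q) ^ (-b) =
      Real.Gamma (1 + 1/q) * Real.Gamma (b - 1/q) / Real.Gamma b := by
  have h := integral_image_eq_integral_abs_deriv_smul measurableSet_Ioi
    (rpow_cov_deriv hq) (rpow_cov_inj hq) (fun s : ℝ => (1 + s ^ q) ^ (-b))
  rw [rpow_cov_image hq] at h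
  rw [h, setIntegral_congr_fun measurableSet_Ioi (fun x hx => L3ptwise (b := b) hq x hx),
    MeasureTheory.integral_const_mul, L2val (1/q) (b - 1/q) (by positivity) (by linarith),
    real_beta (1/q) (b - 1/q) (by positivity) (by linarith)]
  have hq' : (1:ℝ)/q ≠ 0 := by positivity
  have hG : Real.Gamma (1 + 1/q) = (1/q) * Real.Gamma (1/q) := by
    rw [add_comm, Real.Gamma_add_one hq']
  rw [hG]
  have : 1/q + (b - 1/q) = b := by ring
  rw [this]
  ring

end

lemma main_identity (q A b r abar ε : ℝ) (hq : 0 < q) (hA : 0 < A) (hr : 0 < r)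
    (hε : 0 < ε) :
    ε ^ (b - 1/q) * ∫ α in (abar - r)..(abar + r), (ε + A * |α - abar| ^ q) ^ (-b)
      = 2 * A ^ (-(1/q)) *
        ∫ s in (0:ℝ)..(r / (ε/A) ^ (1/q)), (1 + s ^ q) ^ (-b) := by
  set f : ℝ → ℝ := fun u => (ε + A * |u| ^ q) ^ (-b) with hf
  have hbase : ∀ u : ℝ, 0 < ε + A * |u| ^ q := fun u => by
    have : 0 ≤ A * |u| ^ q := mul_nonneg hA.le (Real.rpow_nonneg (abs_nonneg u) q)
    linarith
  have hc : Continuous f := by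
    have h1 : Continuous fun u : ℝ => |u| ^ q :=
      continuous_abs.rpow_const (fun u => Or.inr hq.le)
    exact (continuous_const.add (continuous_const.mul h1)).rpow_const
      (fun u => Or.inl (hbase u).ne')
  set lam : ℝ := (ε/A) ^ (1/q) with hlamdef
  have hlam : 0 < lam := Real.rpow_pos_of_pos (by positivity) _
  have hlamq : lam ^ q = ε / A := by
    rw [hlamdef, ← Real.rpow_mul (by positivity), one_div_mul_cancel hq.ne', Real.rpow_one]
  -- step 1: translate
  have h1 : (∫ α in (abar - r)..(abar + r), (ε + A * |α - abar| ^ q) ^ (-b))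
      = ∫ u in (-r)..r, f u := by
    have := intervalIntegral.integral_comp_sub_right (a := abar - r) (b := abar + r) f abar
    rw [show abar - r - abar = -r by ring, show abar + r - abar = r by ring] at this
    exact this
  -- step 2: even
  have h2 : (∫ u in (-r)..r, f u) = 2 * ∫ u in (0:ℝ)..r, f u := by
    have hneg : (∫ u in (-r)..(0:ℝ), f u) = ∫ u in (0:ℝ)..r, f u := by
      have hn : (∫ u in (0:ℝ)..r, f (-u)) = ∫ u in (-r)..(-0:ℝ), f u :=
        intervalIntegral.integral_comp_neg (a := 0) (b := r) f
      rw [neg_zero] at hn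
      rw [← hn]
      refine intervalIntegral.integral_congr fun u hu => ?_
      simp [hf, abs_neg]
    rw [← intervalIntegral.integral_add_adjacent_intervals
      (hc.intervalIntegrable (-r) 0) (hc.intervalIntegrable 0 r), hneg]
    ring
  -- step 3: scaling
  have h3 : (∫ u in (0:ℝ)..r, f u) = lam * ε ^ (-b) *
      ∫ s in (0:ℝ)..(r / lam), (1 + s ^ q) ^ (-b) := by
    have hs : (lam • ∫ s in (0:ℝ)..(r / lam), f (lam * s)) = ∫ u in (0:ℝ)..r, f u := by
      rw [intervalIntegral.smul_integral_comp_mul_left (a := 0) (b := r / lam) f lam,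
        mul_zero, mul_div_cancel₀ r hlam.ne']
    rw [← hs, smul_eq_mul]
    have hcongr : (∫ s in (0:ℝ)..(r / lam), f (lam * s))
        = ∫ s in (0:ℝ)..(r / lam), ε ^ (-b) * (1 + s ^ q) ^ (-b) := by
      refine intervalIntegral.integral_congr fun s hs => ?_
      rw [uIcc_of_le (by positivity)] at hs
      have hs0 : 0 ≤ s := hs.1
      have : |lam * s| = lam * s := abs_of_nonneg (by positivity)
      rw [hf]
      simp only
      rw [this, Real.mul_rpow hlam.le hs0, hlamq,
        show ε + A * (ε / A * s ^ q) = ε * (1 + s ^ q) by field_simp,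
        Real.mul_rpow hε.le (by positivity)]
    rw [hcongr, intervalIntegral.integral_const_mul]
    ring
  rw [h1, h2, h3, hlamdef]
  have hpow : ε ^ (b - 1/q) * ((ε/A) ^ (1/q) * ε ^ (-b)) = A ^ (-(1/q)) := by
    rw [Real.div_rpow hε.le hA.le, Real.rpow_neg hA.le, div_eq_mul_inv]
    have he : ε ^ (b - 1/q) * ε ^ (1/q) * ε ^ (-b) = 1 := by
      rw [← Real.rpow_add hε, ← Real.rpow_add hε, show b - 1/q + (1/q) + -b = 0 by ring,
        Real.rpow_zero]
    calc ε ^ (b - 1/q) * (ε ^ (1/q) * (A ^ (1/q))⁻¹ * ε ^ (-b))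
        = ε ^ (b - 1/q) * ε ^ (1/q) * ε ^ (-b) * (A ^ (1/q))⁻¹ := by ring
      _ = (A ^ (1/q))⁻¹ := by rw [he, one_mul]
  calc ε ^ (b - 1/q) * (2 * ((ε/A) ^ (1/q) * ε ^ (-b) *
          ∫ s in (0:ℝ)..(r / (ε/A) ^ (1/q)), (1 + s ^ q) ^ (-b)))
      = 2 * (ε ^ (b - 1/q) * ((ε/A) ^ (1/q) * ε ^ (-b))) *
          ∫ s in (0:ℝ)..(r / (ε/A) ^ (1/q)), (1 + s ^ q) ^ (-b) := by ring
    _ = _ := by rw [hpow]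

theorem asymptotic_integral_power_law (q C₁ M₀ r abar b : ℝ)
    (hq : 0 < q) (hC₁ : C₁ < 0) (hM₀ : 0 < M₀) (hr : r ∈ Set.Ioc (0:ℝ) 1)
    (habar : abar ∈ Set.Ioo (0:ℝ) 1)
    (hsub : Set.Icc (abar - r) (abar + r) ⊆ Set.Icc (0:ℝ) 1)
    (hb : 1 / q < b) :
    Filter.Tendsto
      (fun ε : ℝ => ε ^ (b - 1 / q) *
        ∫ α in (abar - r)..(abar + r), (ε - C₁ * |α - abar| ^ q) ^ (-b))
      (nhdsWithin 0 (Set.Ioi 0))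
      (nhds (2 * Real.Gamma (1 + 1 / q) * Real.Gamma (b - 1 / q) /
        (Real.Gamma b * |C₁| ^ (1 / q)))) := by
  set A : ℝ := |C₁| with hAdef
  have hA : 0 < A := abs_pos.mpr hC₁.ne
  set I : ℝ := ∫ s in Ioi (0:ℝ), (1 + s ^ q) ^ (-b) with hIdef
  -- R(ε) → ∞
  have t1 : Tendsto (fun ε : ℝ => ε / A) (𝓝[>] (0:ℝ)) (𝓝[>] (0:ℝ)) := by
    apply tendsto_nhdsWithin_of_tendsto_nhds_of_eventually_within
    · have := (continuous_id.div_const A).tendsto (0:ℝ)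
      simpa using this.mono_left nhdsWithin_le_nhds
    · filter_upwards [self_mem_nhdsWithin] with x hx
      exact div_pos hx hA
  have t2 : Tendsto (fun x : ℝ => x ^ (1/q)) (𝓝[>] (0:ℝ)) (𝓝[>] (0:ℝ)) := by
    apply tendsto_nhdsWithin_of_tendsto_nhds_of_eventually_within
    · have hca : ContinuousAt (fun x : ℝ => x ^ (1/q)) 0 :=
        Real.continuousAt_rpow_const 0 (1/q) (Or.inr (by positivity))
      have h := hca.tendsto.mono_left (nhdsWithin_le_nhds (s := Ioi (0:ℝ)))
      rwa [Real.zero_rpow (by positivity : (1:ℝ)/q ≠ 0)] at h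
    · filter_upwards [self_mem_nhdsWithin] with x hx
      exact Real.rpow_pos_of_pos hx _
  have hR : Tendsto (fun ε : ℝ => r / (ε/A) ^ (1/q)) (𝓝[>] (0:ℝ)) atTop := by
    have hinv : Tendsto (fun ε : ℝ => ((ε/A) ^ (1/q))⁻¹) (𝓝[>] (0:ℝ)) atTop :=
      (t2.comp t1).inv_tendsto_nhdsGT_zero
    simpa [div_eq_mul_inv] using hinv.const_mul_atTop hr.1
  have hΦ : Tendsto (fun ε : ℝ => ∫ s in (0:ℝ)..(r / (ε/A) ^ (1/q)), (1 + s ^ q) ^ (-b))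
      (𝓝[>] (0:ℝ)) (𝓝 I) :=
    intervalIntegral_tendsto_integral_Ioi 0 (L3int hq hb) hR
  have hmain : Tendsto (fun ε : ℝ => 2 * A ^ (-(1/q)) *
      ∫ s in (0:ℝ)..(r / (ε/A) ^ (1/q)), (1 + s ^ q) ^ (-b))
      (𝓝[>] (0:ℝ)) (𝓝 (2 * A ^ (-(1/q)) * I)) := hΦ.const_mul _
  have hval : 2 * A ^ (-(1/q)) * I =
      2 * Real.Gamma (1 + 1/q) * Real.Gamma (b - 1/q) / (Real.Gamma b * A ^ (1/q)) := by
    rw [hIdef, L3val hq hb, Real.rpow_neg hA.le]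
    have h1 : Real.Gamma b ≠ 0 := (Real.Gamma_pos_of_pos (lt_trans (by positivity) hb)).ne'
    have h2 : A ^ (1/q) ≠ 0 := (Real.rpow_pos_of_pos hA _).ne'
    field_simp
  rw [← hval]
  refine hmain.congr' ?_
  filter_upwards [self_mem_nhdsWithin] with ε hε
  have heq : (∫ α in (abar - r)..(abar + r), (ε - C₁ * |α - abar| ^ q) ^ (-b))
      = ∫ α in (abar - r)..(abar + r), (ε + A * |α - abar| ^ q) ^ (-b) := by
    refine intervalIntegral.integral_congr fun α _ => ?_
    rw [hAdef, abs_of_neg hC₁]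
    ring_nf
  rw [← main_identity q A b r abar ε hq hA hr.1 hε, heq]
end

section
/- Let λ = 1/2 and u₀'(α) = 1 - (4/3)α^{1/3} on [0,1], so that J(α,η) = 1 - (η/2)(1 - (4/3)α^{1/3}) for η ∈ [0,2). Then ∫₀¹ J(α,η)^{-2} dα = -(54(η-6)η - 81(2-η)(6+η)·arctanh(2η/(η-6)))/(4(6+η)η³) for all η ∈ (0,2), and this quantity converges to 27/16 as η ↑ 2. -/
open Real Set Filter Topology

/-- The inverse hyperbolic tangent, `artanh x = (1/2)·log((1+x)/(1-x))` for `|x| < 1`. -/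
noncomputable def artanh (x : ℝ) : ℝ := (1 / 2) * Real.log ((1 + x) / (1 - x))

lemma ftc_core (a b : ℝ) (ha : 0 < a) (hb : 0 < b) :
    ∫ t in (0:ℝ)..1, 3 * t ^ 2 * (a + b * t) ^ (-2 : ℤ) =
      3 / b ^ 2 + 3 * a / (b ^ 2 * (a + b)) - 6 * a / b ^ 3 * (Real.log (a + b) - Real.log a) := by
  have key : ∀ t ∈ Set.uIcc (0:ℝ) 1, 0 < a + b * t := by
    intro t ht
    rw [Set.uIcc_of_le (by norm_num)] at ht
    nlinarith [ht.1]
  have hderiv : ∀ t ∈ Set.uIcc (0:ℝ) 1,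
      HasDerivAt (fun t => 3 * t / b ^ 2 - 6 * a / b ^ 3 * Real.log (a + b * t)
          - 3 * a ^ 2 / b ^ 3 * (a + b * t)⁻¹)
        (3 * t ^ 2 * (a + b * t) ^ (-2 : ℤ)) t := by
    intro t ht
    have hpos := key t ht
    have h1 : HasDerivAt (fun t : ℝ => a + b * t) b t := by
      simpa using (hasDerivAt_id t).const_mul b |>.const_add a
    have h2 : HasDerivAt (fun t : ℝ => Real.log (a + b * t)) (b / (a + b * t)) t :=
      (h1.log hpos.ne').congr_deriv rfl
    have h3 : HasDerivAt (fun t : ℝ => (a + b * t)⁻¹) (-(b) / (a + b * t) ^ 2) t := by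
      exact h1.inv hpos.ne'
    have h4 : HasDerivAt (fun t : ℝ => 3 * t / b ^ 2) (3 / b ^ 2) t := by
      simpa [mul_div_assoc] using ((hasDerivAt_id t).const_mul 3 |>.div_const (b ^ 2)).congr_deriv
        (by ring)
    have := (h4.sub (h2.const_mul (6 * a / b ^ 3))).sub (h3.const_mul (3 * a ^ 2 / b ^ 3))
    refine this.congr_deriv ?_
    rw [zpow_neg, show ((2:ℤ)) = ((2:ℕ):ℤ) by norm_num, zpow_natCast]
    field_simp
    ring
  have hint : IntervalIntegrable (fun t => 3 * t ^ 2 * (a + b * t) ^ (-2 : ℤ))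
      MeasureTheory.volume 0 1 := by
    apply ContinuousOn.intervalIntegrable
    apply ContinuousOn.mul (by fun_prop)
    intro t ht
    have := key t ht
    exact ((continuousAt_const.add (continuousAt_const.mul continuousAt_id)).zpow₀ _
      (Or.inl this.ne')).continuousWithinAt
  rw [intervalIntegral.integral_eq_sub_of_hasDerivAt hderiv hint]
  have h1 : (0:ℝ) < a + b := by linarith
  field_simp
  ring

lemma subst_cube (a b : ℝ) (ha : 0 < a) (hb : 0 < b) :
    ∫ α in (0:ℝ)..1, (a + b * α ^ ((1:ℝ)/3)) ^ (-2 : ℤ) =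
      ∫ t in (0:ℝ)..1, 3 * t ^ 2 * (a + b * t) ^ (-2 : ℤ) := by
  have hrpow : ContinuousOn (fun α : ℝ => α ^ ((1:ℝ)/3)) (Set.Icc 0 1) := by
    intro x _
    exact (Real.continuousAt_rpow_const x _ (Or.inr (by norm_num))).continuousWithinAt
  have hpos : ∀ α ∈ Set.Icc (0:ℝ) 1, 0 < a + b * α ^ ((1:ℝ)/3) := by
    intro α hα
    have : (0:ℝ) ≤ α ^ ((1:ℝ)/3) := Real.rpow_nonneg hα.1 _
    nlinarith
  have hg : ContinuousOn (fun α : ℝ => (a + b * α ^ ((1:ℝ)/3)) ^ (-2:ℤ)) (Set.Icc 0 1) := by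
    intro α hα
    exact ((continuousWithinAt_const.add
      (continuousWithinAt_const.mul (hrpow α hα))).zpow₀ _ (Or.inl (hpos α hα).ne'))
  have himg : (fun t : ℝ => t ^ 3) '' Set.uIcc (0:ℝ) 1 ⊆ Set.Icc 0 1 := by
    rintro _ ⟨t, ht, rfl⟩
    rw [Set.uIcc_of_le (by norm_num)] at ht
    refine ⟨pow_nonneg ht.1 3, ?_⟩
    show t ^ 3 ≤ 1
    calc t ^ 3 ≤ 1 ^ 3 := pow_le_pow_left₀ ht.1 ht.2 3
    _ = 1 := one_pow 3
  have hsub := intervalIntegral.integral_comp_smul_deriv'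
    (f := fun t : ℝ => t ^ 3) (f' := fun t => 3 * t ^ 2)
    (g := fun α : ℝ => (a + b * α ^ ((1:ℝ)/3)) ^ (-2:ℤ))
    (a := 0) (b := 1)
    (fun t _ => by simpa using (hasDerivAt_pow 3 t)) (by fun_prop) (hg.mono himg)
  simp only [smul_eq_mul] at hsub
  rw [show ((0:ℝ)^3) = 0 by norm_num, show ((1:ℝ)^3) = 1 by norm_num] at hsub
  rw [← hsub]
  apply intervalIntegral.integral_congr
  intro t ht
  rw [Set.uIcc_of_le (by norm_num)] at ht
  have : ((t ^ 3 : ℝ)) ^ ((1:ℝ)/3) = t := by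
    rw [← Real.rpow_natCast t 3, ← Real.rpow_mul ht.1]
    norm_num
  simp only [Function.comp, this]

lemma integral_eval (η : ℝ) (h0 : 0 < η) (h2 : η < 2) :
    (∫ α in (0:ℝ)..1, (1 - (η / 2) * (1 - (4/3) * α ^ ((1:ℝ)/3))) ^ (-2 : ℤ)) =
      27 / (4 * η ^ 2) + 81 * (2 - η) / (4 * η ^ 2 * (6 + η))
        - 81 * (2 - η) / (8 * η ^ 3) * (Real.log (6 + η) - Real.log (3 * (2 - η))) := by
  have ha : (0:ℝ) < 1 - η / 2 := by linarith
  have hb : (0:ℝ) < 2 * η / 3 := by linarith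
  have hrw : (fun α : ℝ => (1 - (η / 2) * (1 - (4/3) * α ^ ((1:ℝ)/3))) ^ (-2 : ℤ)) =
      fun α : ℝ => ((1 - η / 2) + (2 * η / 3) * α ^ ((1:ℝ)/3)) ^ (-2 : ℤ) := by
    funext α; congr 1; ring
  rw [show (∫ α in (0:ℝ)..1, (1 - (η / 2) * (1 - (4/3) * α ^ ((1:ℝ)/3))) ^ (-2 : ℤ)) =
      ∫ α in (0:ℝ)..1, ((1 - η / 2) + (2 * η / 3) * α ^ ((1:ℝ)/3)) ^ (-2 : ℤ) from by rw [hrw]]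
  rw [subst_cube _ _ ha hb, ftc_core _ _ ha hb]
  have hlog : Real.log (1 - η / 2 + 2 * η / 3) - Real.log (1 - η / 2) =
      Real.log (6 + η) - Real.log (3 * (2 - η)) := by
    rw [show (1 - η / 2 + 2 * η / 3 : ℝ) = (6 + η) / 6 by ring,
      show (1 - η / 2 : ℝ) = (2 - η) / 2 by ring,
      Real.log_div (by linarith) (by norm_num),
      Real.log_div (by linarith) (by norm_num),
      Real.log_mul (by norm_num) (by linarith),
      show Real.log 6 = Real.log 2 + Real.log 3 by
        rw [show (6:ℝ) = 2 * 3 by norm_num, Real.log_mul two_ne_zero three_ne_zero]]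
    ring
  rw [hlog]
  have h6 : (0:ℝ) < 6 + η := by linarith
  have hab : (0:ℝ) < 1 - η / 2 + 2 * η / 3 := by linarith
  generalize (Real.log (6 + η) - Real.log (3 * (2 - η))) = D
  rw [show (1 - η / 2 + 2 * η / 3 : ℝ) = (6 + η) / 6 by ring]
  field_simp
  ring

theorem example1_K0_evaluation :
    (∀ η ∈ Set.Ioo (0:ℝ) 2,
      (∫ α in (0:ℝ)..1, (1 - (η / 2) * (1 - (4/3) * α ^ ((1:ℝ)/3))) ^ (-2 : ℤ)) =
        -(54 * (η - 6) * η - 81 * (2 - η) * (6 + η) * _root_.artanh (2 * η / (η - 6))) /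
          (4 * (6 + η) * η ^ 3)) ∧
    Filter.Tendsto
      (fun η : ℝ => ∫ α in (0:ℝ)..1,
        (1 - (η / 2) * (1 - (4/3) * α ^ ((1:ℝ)/3))) ^ (-2 : ℤ))
      (nhdsWithin 2 (Set.Iio 2)) (nhds (27 / 16)) := by
  constructor
  · intro η hη
    obtain ⟨h0, h2⟩ := hη
    rw [integral_eval η h0 h2]
    have h6 : η - 6 ≠ 0 := by intro h; linarith
    have h6' : (0:ℝ) < 6 + η := by linarith
    have h2' : (0:ℝ) < 2 - η := by linarith
    have h6'' : (0:ℝ) < 6 - η := by linarith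
    have hart : _root_.artanh (2 * η / (η - 6)) =
        (1/2) * (Real.log (3 * (2 - η)) - Real.log (6 + η)) := by
      unfold _root_.artanh
      have e1 : (1 + 2 * η / (η - 6)) = (3 * (2 - η)) / (6 - η) := by
        field_simp
        ring
      have e2 : (1 - 2 * η / (η - 6)) = (6 + η) / (6 - η) := by
        field_simp
        ring
      rw [e1, e2, div_div_div_cancel_right₀ h6''.ne',
        Real.log_div (by positivity) (by positivity)]
    rw [hart]
    have hη0 : η ≠ 0 := h0.ne'
    generalize Real.log (3 * (2 - η)) = L1
    generalize Real.log (6 + η) = L2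
    field_simp
    ring
  · have hev : (fun η : ℝ => ∫ α in (0:ℝ)..1,
        (1 - (η / 2) * (1 - (4/3) * α ^ ((1:ℝ)/3))) ^ (-2 : ℤ)) =ᶠ[𝓝[<] (2:ℝ)]
        fun η => 27 / (4 * η ^ 2) + 81 * (2 - η) / (4 * η ^ 2 * (6 + η))
          - 81 * (2 - η) / (8 * η ^ 3) * (Real.log (6 + η) - Real.log (3 * (2 - η))) := by
      have h1 : Set.Ioi (0:ℝ) ∈ 𝓝[<] (2:ℝ) :=
        nhdsWithin_le_nhds (Ioi_mem_nhds (by norm_num))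
      filter_upwards [h1, self_mem_nhdsWithin] with η hη1 hη2
      exact integral_eval η hη1 hη2
    rw [Filter.tendsto_congr' hev]
    have hfeq : (fun η : ℝ => 27 / (4 * η ^ 2) + 81 * (2 - η) / (4 * η ^ 2 * (6 + η))
          - 81 * (2 - η) / (8 * η ^ 3) * (Real.log (6 + η) - Real.log (3 * (2 - η)))) =
        fun η : ℝ => (27 / (4 * η ^ 2) + 81 * (2 - η) / (4 * η ^ 2 * (6 + η))
          - 81 * (2 - η) / (8 * η ^ 3) * Real.log (6 + η))
          + (81 / (8 * η ^ 3) / 3) * (Real.log (3 * (2 - η)) * (3 * (2 - η))) := by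
      funext η
      by_cases hη : η = 0
      · simp [hη]
      · field_simp
        ring
    rw [hfeq]
    have hC : Filter.Tendsto (fun η : ℝ => 27 / (4 * η ^ 2) + 81 * (2 - η) / (4 * η ^ 2 * (6 + η))
        - 81 * (2 - η) / (8 * η ^ 3) * Real.log (6 + η)) (𝓝[<] (2:ℝ)) (𝓝 (27/16)) := by
      have hcont : ContinuousAt (fun η : ℝ => 27 / (4 * η ^ 2) + 81 * (2 - η) / (4 * η ^ 2 * (6 + η))
          - 81 * (2 - η) / (8 * η ^ 3) * Real.log (6 + η)) 2 := by
        apply ContinuousAt.sub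
        · apply ContinuousAt.add
          · exact (continuousAt_const.div (by fun_prop) (by norm_num))
          · exact (ContinuousAt.div (by fun_prop) (by fun_prop) (by norm_num))
        · apply ContinuousAt.mul
          · exact (ContinuousAt.div (by fun_prop) (by fun_prop) (by norm_num))
          · exact (Real.continuousAt_log (by norm_num)).comp (by fun_prop)
      have h := hcont.tendsto.mono_left (nhdsWithin_le_nhds (s := Set.Iio (2:ℝ)))
      convert h using 2
      norm_num
    have hD : Filter.Tendsto (fun η : ℝ => (81 / (8 * η ^ 3) / 3) *
        (Real.log (3 * (2 - η)) * (3 * (2 - η)))) (𝓝[<] (2:ℝ)) (𝓝 0) := by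
      have hcoef : Filter.Tendsto (fun η : ℝ => 81 / (8 * η ^ 3) / 3) (𝓝[<] (2:ℝ))
          (𝓝 (81 / (8 * 2 ^ 3) / 3)) := by
        apply Filter.Tendsto.mono_left _ nhdsWithin_le_nhds
        exact ((continuousAt_const.div (by fun_prop) (by norm_num)).div_const 3).tendsto
      have hinner : Filter.Tendsto (fun η : ℝ => 3 * (2 - η)) (𝓝[<] (2:ℝ)) (𝓝[>] (0:ℝ)) := by
        apply tendsto_nhdsWithin_of_tendsto_nhds_of_eventually_within
        · have hcont2 : ContinuousAt (fun η : ℝ => 3 * (2 - η)) 2 := by fun_prop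
          have h := hcont2.tendsto.mono_left (nhdsWithin_le_nhds (s := Set.Iio (2:ℝ)))
          convert h using 2
          norm_num
        · filter_upwards [self_mem_nhdsWithin] with η hη
          simp only [Set.mem_Iio] at hη
          exact Set.mem_Ioi.mpr (by linarith)
      have hlog : Filter.Tendsto (fun x : ℝ => Real.log x * x) (𝓝[>] (0:ℝ)) (𝓝 0) := by
        have := tendsto_log_mul_rpow_nhdsGT_zero (r := 1) one_pos
        simpa using this
      have := hcoef.mul (hlog.comp hinner)
      simpa using this
    have := hC.add hD
    simpa using this
end
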